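/- Let 𝒰 be a finite cover of [0,1] by open intervals with pairwise distinct endpoints, let [a_1,b_1], …, [a_k,b_k] be subintervals of [0,1] and h_i : [a_i,b_i] → [a_{i+1},b_{i+1}] homeomorphisms for 1 ≤ i ≤ k−1. Writing h^i_{k-1} = h_{k-1} ∘ … ∘ h_{i+1} (with h^{k-1}_{k-1} = id), any minimal-cardinality subcover ℬ of ⋁_{i=0}^{k-1} h^i_{k-1}(𝒰) covering [a_k,b_k] satisfies |ℬ| ≤ k²·|𝒰|². -/

import Mathlib

open Filter Set

section Defs

variable {Y : Type*}

/-- An `n`-orbit of a set-valued map `F`: a tuple `(x 0, …, x (n-1))` with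
`x (k+1) ∈ F (x k)`. -/
def IsOrbit (F : Y → Set Y) (n : ℕ) (x : ℕ → Y) : Prop :=
  ∀ k : ℕ, k + 1 < n → x (k + 1) ∈ F (x k)

/-- A set `S` of `n`-tuples is `(n,ε)`-separated w.r.t. the distance `d`. -/
def IsSepTuples (d : Y → Y → ℝ) (n : ℕ) (ε : ℝ) (S : Set (ℕ → Y)) : Prop :=
  ∀ x ∈ S, ∀ y ∈ S, (∃ k < n, x k ≠ y k) → ∃ k < n, ε < d (x k) (y k)

/-- The maximal cardinality of an `(n,ε)`-separated set of `n`-orbits of `F`. -/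
noncomputable def sepCountD (d : Y → Y → ℝ) (F : Y → Set Y) (n : ℕ) (ε : ℝ) : ℕ :=
  sSup {m : ℕ | ∃ S : Finset (ℕ → Y),
    (∀ x ∈ S, IsOrbit F n x) ∧ IsSepTuples d n ε ↑S ∧ S.card = m}

/-- Topological entropy of a set-valued map `F`, with respect to a distance
function `d`, via `(n,ε)`-separated sets of orbits. -/
noncomputable def svEntD (d : Y → Y → ℝ) (F : Y → Set Y) : EReal :=
  ⨆ (ε : ℝ) (_ : 0 < ε),
    Filter.atTop.limsup fun n : ℕ =>
      ((Real.log (sepCountD d F n ε) / n : ℝ) : EReal)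

/-- Topological entropy of a set-valued map on a metric space. -/
noncomputable def svEnt [PseudoMetricSpace Y] (F : Y → Set Y) : EReal :=
  svEntD dist F

/-- Composition of set-valued maps: `(svComp G F) x = G (F x)`. -/
def svComp (G F : Y → Set Y) : Y → Set Y := fun x => ⋃ y ∈ F x, G y

/-- `n`-fold composition of a set-valued map. -/
def svIter (F : Y → Set Y) : ℕ → Y → Set Y
  | 0 => fun x => {x}
  | n + 1 => svComp F (svIter F n)

/-- (Bowen) topological entropy of a single-valued map, as the set-valued
entropy of the associated singleton-valued map. -/
noncomputable def ent [PseudoMetricSpace Y] (f : Y → Y) : EReal :=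
  svEnt fun x => {f x}

end Defs

/-- The inverse limit of the system of bonding maps `f i : X (i+1) → X i`. -/
abbrev InvLim {X : ℕ → Type*} (f : ∀ i : ℕ, X (i + 1) → X i) :=
  {x : ∀ i, X i // ∀ i, f i (x (i + 1)) = x i}

/-- A map of the unit interval is piecewise monotone if the interval splits into
finitely many subintervals on which the map is injective. -/
def PiecewiseMonotone (f : unitInterval → unitInterval) : Prop :=
  ∃ n : ℕ, 0 < n ∧ ∃ c : Fin (n + 1) → unitInterval, StrictMono c ∧
    c 0 = 0 ∧ c (Fin.last n) = 1 ∧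
    ∀ i : Fin n, Set.InjOn f (Set.Icc (c i.castSucc) (c i.succ))

/-- `c` is a critical point of `f`: an interior point at which `f` is not
locally monotone. -/
def IsCriticalPt (f : unitInterval → unitInterval) (c : unitInterval) : Prop :=
  c ≠ 0 ∧ c ≠ 1 ∧ ¬ ∃ U ∈ nhds c, MonotoneOn f U ∨ AntitoneOn f U

/-- `f` is an open piecewise monotone map with `n - 1` critical points `t 1 < … < t (n-1)`:
it maps each of its `n` maximal intervals of monotonicity bijectively onto `[0,1]`. -/
def IsOpenFold (n : ℕ) (f : unitInterval → unitInterval)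
    (t : Fin (n + 1) → unitInterval) : Prop :=
  Continuous f ∧ StrictMono t ∧ t 0 = 0 ∧ t (Fin.last n) = 1 ∧
    ∀ i : Fin n, Set.BijOn f (Set.Icc (t i.castSucc) (t i.succ)) Set.univ

/-- A monotone arc in `I × I`: a subcontinuum on which both coordinate
projections are injective (hence homeomorphisms onto their images). -/
def IsMonotoneArc (A : Set (unitInterval × unitInterval)) : Prop :=
  IsCompact A ∧ IsConnected A ∧ Set.InjOn Prod.fst A ∧ Set.InjOn Prod.snd A

/-- Composition of relations on the unit interval: `relComp Γ Δ = Δ ∘ Γ`. -/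
def relComp (Γ Δ : Set (unitInterval × unitInterval)) :
    Set (unitInterval × unitInterval) :=
  {p | ∃ y, (p.1, y) ∈ Γ ∧ (y, p.2) ∈ Δ}


/-- sup of image of an interval piece under a monotone continuous map. -/
lemma sSup_image_mono {g : ℝ → ℝ} {α β p q : ℝ}
    (hg : ContinuousOn g (Icc α β)) (hm : MonotoneOn g (Icc α β))
    (hT : (Ioo p q ∩ Icc α β).Nonempty) :
    sSup (g '' (Ioo p q ∩ Icc α β)) = g (min q β) := by
  obtain ⟨x, hx⟩ := hT
  obtain ⟨⟨hpx, hxq⟩, hαx, hxβ⟩ := hx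
  set m := min q β with hm_def
  have hxm : x ≤ m := le_min hxq.le hxβ
  have hmIcc : m ∈ Icc α β := ⟨le_trans hαx hxm, min_le_right _ _⟩
  have hub : ∀ y ∈ g '' (Ioo p q ∩ Icc α β), y ≤ g m := by
    rintro _ ⟨y, ⟨⟨hpy, hyq⟩, hαy, hyβ⟩, rfl⟩
    exact hm ⟨hαy, hyβ⟩ hmIcc (le_min hyq.le hyβ)
  have hne : (g '' (Ioo p q ∩ Icc α β)).Nonempty :=
    ⟨g x, ⟨x, ⟨⟨hpx, hxq⟩, hαx, hxβ⟩, rfl⟩⟩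
  have hbdd : BddAbove (g '' (Ioo p q ∩ Icc α β)) := ⟨g m, hub⟩
  refine le_antisymm (csSup_le hne hub) ?_
  rcases eq_or_lt_of_le hxm with heq | hxm
  · rw [← heq]; exact le_csSup hbdd ⟨x, ⟨⟨hpx, hxq⟩, hαx, hxβ⟩, rfl⟩
  · -- x < m, so [x, m) ⊆ T and g m is a limit of values in the image
    have hsub : Ico x m ⊆ Ioo p q ∩ Icc α β := by
      rintro y ⟨hxy, hym⟩
      exact ⟨⟨lt_of_lt_of_le hpx hxy, lt_of_lt_of_le hym (min_le_left _ _)⟩,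
        le_trans hαx hxy, le_of_lt (lt_of_lt_of_le hym (min_le_right _ _))⟩
    have hcw : ContinuousWithinAt g (Ico x m) m :=
      ((hg m hmIcc).mono (hsub.trans inter_subset_right))
    have hmcl : m ∈ closure (Ico x m) := by
      rw [closure_Ico (ne_of_lt hxm)]; exact ⟨hxm.le, le_rfl⟩
    have h1 : g m ∈ closure (g '' Ico x m) := hcw.mem_closure_image hmcl
    have h2 : closure (g '' Ico x m) ⊆ Iic (sSup (g '' (Ioo p q ∩ Icc α β))) := by
      apply closure_minimal _ isClosed_Iic
      exact fun y hy => le_csSup hbdd (image_mono hsub hy)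
    exact h2 h1

lemma sSup_image_anti {g : ℝ → ℝ} {α β p q : ℝ}
    (hg : ContinuousOn g (Icc α β)) (hm : AntitoneOn g (Icc α β))
    (hT : (Ioo p q ∩ Icc α β).Nonempty) :
    sSup (g '' (Ioo p q ∩ Icc α β)) = g (max p α) := by
  obtain ⟨x, hx⟩ := hT
  obtain ⟨⟨hpx, hxq⟩, hαx, hxβ⟩ := hx
  set m := max p α with hm_def
  have hmx : m ≤ x := max_le hpx.le hαx
  have hmIcc : m ∈ Icc α β := ⟨le_max_right _ _, le_trans hmx hxβ⟩
  have hub : ∀ y ∈ g '' (Ioo p q ∩ Icc α β), y ≤ g m := by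
    rintro _ ⟨y, ⟨⟨hpy, hyq⟩, hαy, hyβ⟩, rfl⟩
    exact hm hmIcc ⟨hαy, hyβ⟩ (max_le hpy.le hαy)
  have hne : (g '' (Ioo p q ∩ Icc α β)).Nonempty :=
    ⟨g x, ⟨x, ⟨⟨hpx, hxq⟩, hαx, hxβ⟩, rfl⟩⟩
  have hbdd : BddAbove (g '' (Ioo p q ∩ Icc α β)) := ⟨g m, hub⟩
  refine le_antisymm (csSup_le hne hub) ?_
  rcases eq_or_lt_of_le hmx with heq | hmx
  · rw [heq]; exact le_csSup hbdd ⟨x, ⟨⟨hpx, hxq⟩, hαx, hxβ⟩, rfl⟩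
  · have hsub : Ioc m x ⊆ Ioo p q ∩ Icc α β := by
      rintro y ⟨hmy, hyx⟩
      exact ⟨⟨lt_of_le_of_lt (le_max_left _ _) hmy, lt_of_le_of_lt hyx hxq⟩,
        le_of_lt (lt_of_le_of_lt (le_max_right _ _) hmy), le_trans hyx hxβ⟩
    have hcw : ContinuousWithinAt g (Ioc m x) m :=
      ((hg m hmIcc).mono (hsub.trans inter_subset_right))
    have hmcl : m ∈ closure (Ioc m x) := by
      rw [closure_Ioc (ne_of_lt hmx)]; exact ⟨le_rfl, hmx.le⟩
    have h1 : g m ∈ closure (g '' Ioc m x) := hcw.mem_closure_image hmcl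
    have h2 : closure (g '' Ioc m x) ⊆ Iic (sSup (g '' (Ioo p q ∩ Icc α β))) := by
      apply closure_minimal _ isClosed_Iic
      exact fun y hy => le_csSup hbdd (image_mono hsub hy)
    exact h2 h1

lemma mono_endpoints {g : ℝ → ℝ} {α β c d : ℝ} (hαβ : α ≤ β)
    (hm : MonotoneOn g (Icc α β)) (hb : BijOn g (Icc α β) (Icc c d)) :
    g α = c ∧ g β = d := by
  have hα : α ∈ Icc α β := ⟨le_rfl, hαβ⟩
  have hβ : β ∈ Icc α β := ⟨hαβ, le_rfl⟩
  constructor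
  · obtain ⟨t, ht, hgt⟩ := hb.surjOn (show c ∈ Icc c d from ⟨le_rfl, ((hb.mapsTo hα).1.trans (hb.mapsTo hα).2)⟩)
    exact le_antisymm (hgt ▸ hm hα ht ht.1) (hb.mapsTo hα).1
  · obtain ⟨t, ht, hgt⟩ := hb.surjOn (show d ∈ Icc c d from ⟨((hb.mapsTo hα).1.trans (hb.mapsTo hα).2), le_rfl⟩)
    exact le_antisymm (hb.mapsTo hβ).2 (hgt ▸ hm ht hβ ht.2)

lemma anti_endpoints {g : ℝ → ℝ} {α β c d : ℝ} (hαβ : α ≤ β)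
    (hm : AntitoneOn g (Icc α β)) (hb : BijOn g (Icc α β) (Icc c d)) :
    g α = d ∧ g β = c := by
  have hα : α ∈ Icc α β := ⟨le_rfl, hαβ⟩
  have hβ : β ∈ Icc α β := ⟨hαβ, le_rfl⟩
  constructor
  · obtain ⟨t, ht, hgt⟩ := hb.surjOn (show d ∈ Icc c d from ⟨((hb.mapsTo hα).1.trans (hb.mapsTo hα).2), le_rfl⟩)
    exact le_antisymm (hb.mapsTo hα).2 (hgt ▸ hm hα ht ht.1)
  · obtain ⟨t, ht, hgt⟩ := hb.surjOn (show c ∈ Icc c d from ⟨le_rfl, ((hb.mapsTo hα).1.trans (hb.mapsTo hα).2)⟩)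
    exact le_antisymm (hgt ▸ hm ht hβ ht.2) (hb.mapsTo hβ).1


/-- given a finite cover `𝒰` of `[0,1]` by open intervals with
pairwise distinct endpoints, a chain of homeomorphisms
`h i : [a i, b i] → [a (i+1), b (i+1)]` for `1 ≤ i ≤ k-1`, and the compositions
`G i = h (k-1) ∘ … ∘ h (i+1)`, any minimal-cardinality subcover `ℬ` of
`⋁_{i<k} G i (𝒰)` covering `[a k, b k]` satisfies `|ℬ| ≤ k² · |𝒰|²`. -/
theorem stmt_10 (k : ℕ) (hk : 1 ≤ k)
    (𝒰 : Finset (Set ℝ))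
    (hUopen : ∀ U ∈ 𝒰, ∃ p q : ℝ, p < q ∧ U = Set.Ioo p q)
    (hUdist : ∀ U ∈ 𝒰, ∀ V ∈ 𝒰, U ≠ V → ∀ p q r s : ℝ, p < q → r < s →
      U = Set.Ioo p q → V = Set.Ioo r s → p ≠ r ∧ p ≠ s ∧ q ≠ r ∧ q ≠ s)
    (hUcover : Set.Icc (0 : ℝ) 1 ⊆ ⋃ U ∈ 𝒰, U)
    (a b : ℕ → ℝ) (hab : ∀ i, 1 ≤ i → i ≤ k → a i ≤ b i)
    (hsub : ∀ i, 1 ≤ i → i ≤ k → Set.Icc (a i) (b i) ⊆ Set.Icc (0 : ℝ) 1)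
    (h : ℕ → ℝ → ℝ)
    (hhc : ∀ i, 1 ≤ i → i ≤ k - 1 → ContinuousOn (h i) (Set.Icc (a i) (b i)))
    (hhb : ∀ i, 1 ≤ i → i ≤ k - 1 →
      Set.BijOn (h i) (Set.Icc (a i) (b i)) (Set.Icc (a (i + 1)) (b (i + 1))))
    (G : ℕ → ℝ → ℝ) (hGtop : G (k - 1) = id)
    (hGrec : ∀ i, i < k - 1 → ∀ x, G i x = G (i + 1) (h (i + 1) x))
    (ℬ : Finset (Set ℝ))
    (hBmem : ∀ B ∈ ℬ, B.Nonempty ∧ ∃ u : ℕ → Set ℝ, (∀ i < k, u i ∈ 𝒰) ∧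
      B = ⋂ i ∈ Finset.range k, G i '' (u i ∩ Set.Icc (a (i + 1)) (b (i + 1))))
    (hBcover : Set.Icc (a k) (b k) ⊆ ⋃ B ∈ ℬ, B)
    (hBmin : ∀ ℬ' : Finset (Set ℝ),
      (∀ B ∈ ℬ', B.Nonempty ∧ ∃ u : ℕ → Set ℝ, (∀ i < k, u i ∈ 𝒰) ∧
        B = ⋂ i ∈ Finset.range k, G i '' (u i ∩ Set.Icc (a (i + 1)) (b (i + 1)))) →
      Set.Icc (a k) (b k) ⊆ (⋃ B ∈ ℬ', B) → ℬ.card ≤ ℬ'.card) :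
    ℬ.card ≤ k ^ 2 * 𝒰.card ^ 2 := by
  classical
  -- 𝒰 is nonempty
  have hn1 : 1 ≤ 𝒰.card := by
    have h0 : (0 : ℝ) ∈ ⋃ U ∈ 𝒰, U := hUcover ⟨le_rfl, zero_le_one⟩
    rw [Set.mem_iUnion₂] at h0
    obtain ⟨U, hU, -⟩ := h0
    exact Finset.card_pos.2 ⟨U, hU⟩
  -- choose the tuples
  have hmem2 := fun B (hB : B ∈ ℬ) => (hBmem B hB).2
  choose u hu hBeq using hmem2
  -- crude bound: |ℬ| ≤ |𝒰| ^ k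
  have htuple : ℬ.card ≤ 𝒰.card ^ k := by
    have hinj : Function.Injective
        (fun (B : {B // B ∈ ℬ}) (i : Fin k) => (⟨u B.1 B.2 i.1, hu B.1 B.2 i.1 i.2⟩ : {U // U ∈ 𝒰})) := by
      intro B B' hφ
      apply Subtype.ext
      rw [hBeq B.1 B.2, hBeq B'.1 B'.2]
      apply Set.iInter_congr; intro j
      apply Set.iInter_congr; intro hj
      have hjk := Finset.mem_range.1 hj
      have : u B.1 B.2 j = u B'.1 B'.2 j :=
        congrArg Subtype.val (congrFun hφ ⟨j, hjk⟩)
      rw [this]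
    calc ℬ.card = Fintype.card {B // B ∈ ℬ} := (Fintype.card_coe ℬ).symm
      _ ≤ Fintype.card (Fin k → {U // U ∈ 𝒰}) := Fintype.card_le_of_injective _ hinj
      _ = 𝒰.card ^ k := by simp [Fintype.card_fun]
  rcases le_or_gt k 2 with hk2 | hk3
  · interval_cases k
    · calc ℬ.card ≤ 𝒰.card ^ 1 := htuple
        _ ≤ 1 ^ 2 * 𝒰.card ^ 2 := by nlinarith
    · calc ℬ.card ≤ 𝒰.card ^ 2 := htuple
        _ ≤ 2 ^ 2 * 𝒰.card ^ 2 := by nlinarith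
  rcases le_or_gt 𝒰.card 1 with hncard | hn2
  · have hone : 𝒰.card = 1 := le_antisymm hncard hn1
    calc ℬ.card ≤ 𝒰.card ^ k := htuple
      _ = 1 := by rw [hone, one_pow]
      _ ≤ k ^ 2 * 𝒰.card ^ 2 := by rw [hone]; nlinarith
  -- main case : k ≥ 3, |𝒰| ≥ 2
  -- the maps G i are bijective and continuous on their domains
  have hGd : ∀ d : ℕ, d ≤ k - 1 →
      Set.BijOn (G (k-1-d)) (Set.Icc (a (k-d)) (b (k-d))) (Set.Icc (a k) (b k)) ∧
      ContinuousOn (G (k-1-d)) (Set.Icc (a (k-d)) (b (k-d))) := by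
    intro d
    induction d with
    | zero =>
      intro _
      constructor
      · simpa [hGtop] using Set.bijOn_id (Set.Icc (a k) (b k))
      · simpa [hGtop] using continuousOn_id (s := Set.Icc (a k) (b k))
    | succ d ih =>
      intro hd1
      obtain ⟨ihb, ihc⟩ := ih (by omega)
      have e1 : k - 1 - (d+1) + 1 = k - 1 - d := by omega
      have e2 : k - (d+1) = k - 1 - d := by omega
      have e3 : k - 1 - d + 1 = k - d := by omega
      have hrec := hGrec (k - 1 - (d+1)) (by omega)
      rw [e1] at hrec
      have hhb' := hhb (k - 1 - d) (by omega) (by omega)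
      have hhc' := hhc (k - 1 - d) (by omega) (by omega)
      rw [e3] at hhb'
      rw [e2]
      constructor
      · refine Set.BijOn.congr (ihb.comp hhb') ?_
        intro x _; exact (hrec x).symm
      · refine ContinuousOn.congr (ihc.comp hhc' ?_) ?_
        · exact hhb'.mapsTo
        · intro x _; exact hrec x
  have hG : ∀ i, i < k →
      Set.BijOn (G i) (Set.Icc (a (i+1)) (b (i+1))) (Set.Icc (a k) (b k)) ∧
      ContinuousOn (G i) (Set.Icc (a (i+1)) (b (i+1))) := by
    intro i hi
    have e : k - 1 - (k - 1 - i) = i := by omega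
    have e2 : k - (k - 1 - i) = i + 1 := by omega
    have := hGd (k - 1 - i) (by omega)
    rw [e, e2] at this
    exact this
  -- each element of the join is order-connected
  have hJord : ∀ v ∈ 𝒰, ∀ i, i < k →
      OrdConnected (G i '' (v ∩ Set.Icc (a (i+1)) (b (i+1)))) := by
    intro v hv i hi
    obtain ⟨p, q, hpq, rfl⟩ := hUopen v hv
    have hpre : IsPreconnected (Set.Ioo p q ∩ Set.Icc (a (i+1)) (b (i+1))) :=
      (Set.ordConnected_Ioo.inter Set.ordConnected_Icc).isPreconnected
    exact (hpre.image _ ((hG i hi).2.mono inter_subset_right)).ordConnected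
  have hBfacts : ∀ B, B ∈ ℬ → B.Nonempty ∧ B ⊆ Set.Icc (a k) (b k) ∧ OrdConnected B := by
    intro B hB
    refine ⟨(hBmem B hB).1, ?_, ?_⟩
    · have h0 : B ⊆ G 0 '' (u B hB 0 ∩ Set.Icc (a 1) (b 1)) := by
        conv_lhs => rw [hBeq B hB]
        exact Set.biInter_subset_of_mem (Finset.mem_range.2 (by omega))
      exact h0.trans ((Set.image_mono inter_subset_right).trans
        (hG 0 (by omega)).1.mapsTo.image_subset)
    · rw [hBeq B hB]
      exact Set.ordConnected_biInter fun i hi =>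
        hJord _ (hu B hB i (Finset.mem_range.1 hi)) i (Finset.mem_range.1 hi)
  -- private points from minimality
  have hpriv : ∀ B, B ∈ ℬ → ∃ x, x ∈ B ∧ ∀ B', B' ∈ ℬ → B' ≠ B → x ∉ B' := by
    intro B hB
    by_contra hcon
    push_neg at hcon
    have hmem' : ∀ B' ∈ ℬ.erase B, B'.Nonempty ∧ ∃ u : ℕ → Set ℝ, (∀ i < k, u i ∈ 𝒰) ∧
        B' = ⋂ i ∈ Finset.range k, G i '' (u i ∩ Set.Icc (a (i + 1)) (b (i + 1))) :=
      fun B' hB' => hBmem B' (Finset.mem_of_mem_erase hB')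
    have hcov' : Set.Icc (a k) (b k) ⊆ ⋃ B' ∈ ℬ.erase B, B' := by
      intro x hx
      have := hBcover hx
      rw [Set.mem_iUnion₂] at this
      obtain ⟨B₀, hB₀, hxB₀⟩ := this
      by_cases hB₀B : B₀ = B
      · subst hB₀B
        obtain ⟨B', hB', hne, hx'⟩ := hcon x hxB₀
        exact Set.mem_biUnion (Finset.mem_erase.2 ⟨hne, hB'⟩) hx'
      · exact Set.mem_biUnion (Finset.mem_erase.2 ⟨hB₀B, hB₀⟩) hxB₀
    have h1 := hBmin _ hmem' hcov'
    have h2 : (ℬ.erase B).card < ℬ.card := Finset.card_erase_lt_of_mem hB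
    omega
  -- the finite set of possible endpoints
  set E : Finset ℝ := insert (a k) (insert (b k)
    ((Finset.range k ×ˢ 𝒰).biUnion fun x =>
      {G x.1 (sInf x.2), G x.1 (sSup x.2)})) with hE_def
  have hEcard : E.card ≤ 2 + k * 𝒰.card * 2 := by
    have h1 : ((Finset.range k ×ˢ 𝒰).biUnion fun x =>
        ({G x.1 (sInf x.2), G x.1 (sSup x.2)} : Finset ℝ)).card ≤ (k * 𝒰.card) * 2 := by
      have := Finset.card_biUnion_le_card_mul (Finset.range k ×ˢ 𝒰)
        (fun x => ({G x.1 (sInf x.2), G x.1 (sSup x.2)} : Finset ℝ)) 2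
        (fun x _ => (Finset.card_insert_le _ _).trans (by simp))
      simpa [Finset.card_product] using this
    have h2 := Finset.card_insert_le (a k) (insert (b k)
      ((Finset.range k ×ˢ 𝒰).biUnion fun x =>
        ({G x.1 (sInf x.2), G x.1 (sSup x.2)} : Finset ℝ)))
    have h3 := Finset.card_insert_le (b k)
      ((Finset.range k ×ˢ 𝒰).biUnion fun x =>
        ({G x.1 (sInf x.2), G x.1 (sSup x.2)} : Finset ℝ))
    rw [hE_def]
    omega
  -- the supremum of each element of ℬ lies in E
  have hsup : ∀ B, B ∈ ℬ → sSup B ∈ E := by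
    intro B hB
    obtain ⟨hBne, hBsubIcc, hBord⟩ := hBfacts B hB
    obtain ⟨x, hx⟩ := hBne
    have hBJ : ∀ i, i < k → B ⊆ G i '' (u B hB i ∩ Set.Icc (a (i+1)) (b (i+1))) := by
      intro i hi; conv_lhs => rw [hBeq B hB]
      exact Set.biInter_subset_of_mem (Finset.mem_range.2 hi)
    have hJsub : ∀ i, i < k →
        G i '' (u B hB i ∩ Set.Icc (a (i+1)) (b (i+1))) ⊆ Set.Icc (a k) (b k) :=
      fun i hi => (Set.image_mono inter_subset_right).trans
        (hG i hi).1.mapsTo.image_subset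
    have hbddB : BddAbove B := BddAbove.mono hBsubIcc bddAbove_Icc
    have hbddJ : ∀ i, i < k →
        BddAbove (G i '' (u B hB i ∩ Set.Icc (a (i+1)) (b (i+1)))) :=
      fun i hi => BddAbove.mono (hJsub i hi) bddAbove_Icc
    have hsle : ∀ i, i < k →
        sSup B ≤ sSup (G i '' (u B hB i ∩ Set.Icc (a (i+1)) (b (i+1)))) :=
      fun i hi => csSup_le_csSup (hbddJ i hi) ⟨x, hx⟩ (hBJ i hi)
    have hex : ∃ i, i < k ∧
        sSup (G i '' (u B hB i ∩ Set.Icc (a (i+1)) (b (i+1)))) ≤ sSup B := by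
      by_contra hcon
      push_neg at hcon
      have hxs : x ≤ sSup B := le_csSup hbddB hx
      have hz : ∀ i, i < k → ∃ z ∈ G i '' (u B hB i ∩ Set.Icc (a (i+1)) (b (i+1))),
          sSup B < z :=
        fun i hi => exists_lt_of_lt_csSup ⟨x, hBJ i hi hx⟩ (hcon i hi)
      choose z hz1 hz2 using hz
      have hkpos : (Finset.range k).Nonempty := Finset.nonempty_range_iff.2 (by omega)
      set F := (Finset.range k).attach.image
        (fun i => z i.1 (Finset.mem_range.1 i.2)) with hF_def
      have hFne : F.Nonempty := (hkpos.attach).image _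
      have hm_mem : F.min' hFne ∈ (Finset.range k).attach.image
          (fun i => z i.1 (Finset.mem_range.1 i.2)) := by
        rw [← hF_def]; exact F.min'_mem hFne
      obtain ⟨i₀, -, hi₀⟩ := Finset.mem_image.1 hm_mem
      have hsm : sSup B < F.min' hFne := by
        rw [← hi₀]; exact hz2 _ _
      have hmB : F.min' hFne ∈ B := by
        rw [hBeq B hB]
        refine Set.mem_iInter₂.2 fun i hi => ?_
        have hik := Finset.mem_range.1 hi
        have hmle : F.min' hFne ≤ z i hik :=
          F.min'_le _ (by rw [hF_def]; exact Finset.mem_image.2 ⟨⟨i, hi⟩, Finset.mem_attach _ _, rfl⟩)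
        exact (hJord _ (hu B hB i hik) i hik).out (hBJ i hik hx) (hz1 i hik)
          ⟨le_trans hxs hsm.le, hmle⟩
      exact absurd (le_csSup hbddB hmB) (not_le.2 hsm)
    obtain ⟨i, hik, hile⟩ := hex
    have hseq : sSup B = sSup (G i '' (u B hB i ∩ Set.Icc (a (i+1)) (b (i+1)))) :=
      le_antisymm (hsle i hik) hile
    obtain ⟨p, q, hpq, hupq⟩ := hUopen (u B hB i) (hu B hB i hik)
    have hTne : (Set.Ioo p q ∩ Set.Icc (a (i+1)) (b (i+1))).Nonempty := by
      have hxJ := hBJ i hik hx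
      rw [hupq] at hxJ
      obtain ⟨y, hy, -⟩ := hxJ
      exact ⟨y, hy⟩
    have hab' : a (i+1) ≤ b (i+1) := hab (i+1) (by omega) (by omega)
    have hmemE : ∀ w ∈ ({G i (sInf (u B hB i)), G i (sSup (u B hB i))} : Finset ℝ),
        w ∈ E := by
      intro w hw
      rw [hE_def]
      refine Finset.mem_insert_of_mem (Finset.mem_insert_of_mem ?_)
      exact Finset.mem_biUnion.2 ⟨(i, u B hB i),
        Finset.mem_product.2 ⟨Finset.mem_range.2 hik, hu B hB i hik⟩, hw⟩
    have hbkE : b k ∈ E := by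
      rw [hE_def]; exact Finset.mem_insert_of_mem (Finset.mem_insert_self _ _)
    rcases (hG i hik).2.strictMonoOn_of_injOn_Icc' hab' (hG i hik).1.injOn with hmono | hanti
    · have hcomp := sSup_image_mono (hG i hik).2 hmono.monotoneOn hTne
      rcases min_cases q (b (i+1)) with ⟨hmin, -⟩ | ⟨hmin, -⟩
      · have : sSup B = G i (sSup (u B hB i)) := by
          rw [hseq, hupq, hcomp, hmin, csSup_Ioo hpq]
        rw [this]
        exact hmemE _ (Finset.mem_insert_of_mem (Finset.mem_singleton_self _))
      · have : sSup B = b k := by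
          rw [hseq, hupq, hcomp, hmin,
            (mono_endpoints hab' hmono.monotoneOn (hG i hik).1).2]
        rw [this]; exact hbkE
    · have hcomp := sSup_image_anti (hG i hik).2 hanti.antitoneOn hTne
      rcases max_cases p (a (i+1)) with ⟨hmax, -⟩ | ⟨hmax, -⟩
      · have : sSup B = G i (sInf (u B hB i)) := by
          rw [hseq, hupq, hcomp, hmax, csInf_Ioo hpq]
        rw [this]
        exact hmemE _ (Finset.mem_insert_self _ _)
      · have : sSup B = b k := by
          rw [hseq, hupq, hcomp, hmax,
            (anti_endpoints hab' hanti.antitoneOn (hG i hik).1).1]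
        rw [this]; exact hbkE
  -- the key injectivity argument
  have key : ∀ (C C' : Set ℝ) (y y' : ℝ), C ∈ ℬ → C' ∈ ℬ → y ∈ C → y' ∈ C' →
      y' ∉ C → y < y' → sSup C = sSup C' → ((sSup C ∈ C) ↔ (sSup C' ∈ C')) → False := by
    intro C C' y y' hC hC' hy hy' hy'C hyy' hss hiff
    obtain ⟨hCne, hCsub, hCord⟩ := hBfacts C hC
    obtain ⟨hC'ne, hC'sub, hC'ord⟩ := hBfacts C' hC'
    have hlt : ∀ z ∈ C, z < y' := by
      intro z hz
      by_contra hzy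
      push_neg at hzy
      exact hy'C (hCord.out hy hz ⟨hyy'.le, hzy⟩)
    have h1 : sSup C ≤ y' := csSup_le hCne fun z hz => (hlt z hz).le
    have h2 : y' ≤ sSup C' := le_csSup (BddAbove.mono hC'sub bddAbove_Icc) hy'
    have h3 : y' = sSup C' := le_antisymm h2 (hss ▸ h1)
    have h4 : sSup C' ∈ C' := h3 ▸ hy'
    have h5 : sSup C ∈ C := hiff.2 h4
    have h6 := hlt _ h5
    rw [hss, ← h3] at h6
    exact lt_irrefl _ h6
  have hcard2 : ℬ.card ≤ (E ×ˢ (Finset.univ : Finset Bool)).card := by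
    apply Finset.card_le_card_of_injOn (fun B => (sSup B, decide (sSup B ∈ B)))
    · intro B hB
      exact Finset.mem_product.2 ⟨hsup B hB, Finset.mem_univ _⟩
    · intro B hB' B' hB'' hfeq
      simp only [Finset.mem_coe] at hB' hB''
      by_contra hne
      have hs : sSup B = sSup B' := congrArg Prod.fst hfeq
      have hflag : (sSup B ∈ B) ↔ (sSup B' ∈ B') := by
        have := congrArg Prod.snd hfeq
        simpa [decide_eq_decide] using this
      obtain ⟨x, hxB, hxpriv⟩ := hpriv B hB'
      obtain ⟨x', hx'B, hx'priv⟩ := hpriv B' hB''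
      have hxnB' : x ∉ B' := hxpriv B' hB'' (Ne.symm hne)
      have hx'nB : x' ∉ B := hx'priv B hB' hne
      rcases lt_trichotomy x x' with hlt | heq | hlt
      · exact key B B' x x' hB' hB'' hxB hx'B hx'nB hlt hs hflag
      · exact hxnB' (heq ▸ hx'B)
      · exact key B' B x' x hB'' hB' hx'B hxB hxnB' hlt hs.symm hflag.symm
  have hprod : (E ×ˢ (Finset.univ : Finset Bool)).card = E.card * 2 := by
    simp [Finset.card_product]
  have hfinal : ℬ.card ≤ (2 + k * 𝒰.card * 2) * 2 := by
    calc ℬ.card ≤ (E ×ˢ (Finset.univ : Finset Bool)).card := hcard2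
      _ = E.card * 2 := hprod
      _ ≤ (2 + k * 𝒰.card * 2) * 2 := by omega
  have h6 : 6 ≤ k * 𝒰.card := by
    calc 6 = 3 * 2 := rfl
      _ ≤ k * 𝒰.card := Nat.mul_le_mul hk3 hn2
  nlinarith [Nat.mul_le_mul h6 h6, hfinal, h6]
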